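/- Fix an integer n ≥ 1. There is an isomorphism of ℂ-algebras R/I ≅ ℂ[p]/(p^{n+1} − 1) sending the residue class of each variable x_i (i = 1,…,n) to the class of p; under this isomorphism the residue class of f is sent to (n+1)·p. -/

import Mathlib

open Complex

/-- The ring of Laurent polynomials `ℂ[x_1^{±1},…,x_n^{±1}]`. -/
abbrev LaurentR (n : ℕ) : Type := AddMonoidAlgebra ℂ (Fin n → ℤ)

/-- The variable `x_i`. -/
noncomputable def LX (n : ℕ) (i : Fin n) : LaurentR n :=
  AddMonoidAlgebra.single (Pi.single i (1 : ℤ)) 1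

/-- The monomial `(x_1⋯x_n)⁻¹`. -/
noncomputable def LXinv (n : ℕ) : LaurentR n :=
  AddMonoidAlgebra.single (fun _ => (-1 : ℤ)) 1

/-- The mirror superpotential `f = x_1 + ⋯ + x_n + (x_1⋯x_n)⁻¹`. -/
noncomputable def Lf (n : ℕ) : LaurentR n := (∑ i, LX n i) + LXinv n

/-- The Jacobian ideal `I = (x_1·∂f/∂x_1, …, x_n·∂f/∂x_n)
  = (x_1 − (x_1⋯x_n)⁻¹, …, x_n − (x_1⋯x_n)⁻¹)`. -/
noncomputable def LI (n : ℕ) : Ideal (LaurentR n) :=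
  Ideal.span (Set.range fun i : Fin n => LX n i - LXinv n)

-- units
noncomputable def Uu (n : ℕ) (i : Fin n) : (LaurentR n)ˣ where
  val := AddMonoidAlgebra.single (Pi.single i (1 : ℤ)) 1
  inv := AddMonoidAlgebra.single (Pi.single i (-1 : ℤ)) 1
  val_inv := by
    rw [AddMonoidAlgebra.single_mul_single]
    norm_num
    rw [← Pi.single_add]
    norm_num
    rfl
  inv_val := by
    rw [AddMonoidAlgebra.single_mul_single]
    norm_num
    rw [← Pi.single_add]
    norm_num
    rfl

lemma Uu_zpow (n : ℕ) (i : Fin n) (k : ℤ) :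
    ((Uu n i ^ k : (LaurentR n)ˣ) : LaurentR n)
      = AddMonoidAlgebra.single (Pi.single i k) 1 := by
  induction k using Int.induction_on with
  | zero => simp [AddMonoidAlgebra.one_def]
  | succ m ih =>
    rw [zpow_add_one, Units.val_mul, ih]
    show _ * (Uu n i).val = _
    rw [Uu, AddMonoidAlgebra.single_mul_single, ← Pi.single_add]
    norm_num
  | pred m ih =>
    rw [zpow_sub_one, Units.val_mul, ih]
    show _ * (Uu n i)⁻¹.val = _
    have h : (((Uu n i)⁻¹ : (LaurentR n)ˣ) : LaurentR n)
        = AddMonoidAlgebra.single (Pi.single i (-1 : ℤ)) 1 := rfl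
    rw [h, AddMonoidAlgebra.single_mul_single, ← Pi.single_add]
    norm_num [sub_eq_add_neg]

lemma zpow_finset_sum {G : Type*} [CommGroup G] (g : G) {ι : Type*} (s : Finset ι)
    (f : ι → ℤ) : g ^ (∑ i ∈ s, f i) = ∏ i ∈ s, g ^ f i := by
  induction s using Finset.cons_induction with
  | empty => simp
  | cons a s ha ih => simp [Finset.sum_cons, Finset.prod_cons, zpow_add, ih]

lemma LX_sub_mem (n : ℕ) (i : Fin n) : LX n i - LXinv n ∈ LI n :=
  Ideal.subset_span ⟨i, rfl⟩

lemma mk_LX_eq (n : ℕ) (i j : Fin n) :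
    Ideal.Quotient.mk (LI n) (LX n i) = Ideal.Quotient.mk (LI n) (LX n j) := by
  rw [Ideal.Quotient.eq]
  have := (LI n).sub_mem (LX_sub_mem n i) (LX_sub_mem n j)
  simpa using this

noncomputable def Wq (n : ℕ) (i : Fin n) : (LaurentR n ⧸ LI n)ˣ :=
  Units.map (Ideal.Quotient.mk (LI n)).toMonoidHom (Uu n i)

lemma Wq_eq (n : ℕ) (i j : Fin n) : Wq n i = Wq n j := by
  ext
  exact mk_LX_eq n i j

lemma mk_single (n : ℕ) (i0 : Fin n) (v : Fin n → ℤ) :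
    Ideal.Quotient.mk (LI n) (AddMonoidAlgebra.single v 1)
      = ↑(Wq n i0 ^ (∑ i, v i)) := by
  have h1 : (AddMonoidAlgebra.single v 1 : LaurentR n)
      = ∏ i, AddMonoidAlgebra.single (Pi.single i (v i)) 1 := by
    rw [AddMonoidAlgebra.prod_single, Finset.univ_sum_single, Finset.prod_const_one]
  have h2 : ((Wq n i0 ^ (∑ i, v i) : (LaurentR n ⧸ LI n)ˣ) : LaurentR n ⧸ LI n)
      = ∏ i, ((Wq n i0 ^ v i : (LaurentR n ⧸ LI n)ˣ) : LaurentR n ⧸ LI n) := by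
    have h2a : (Wq n i0 ^ (∑ i, v i)) = ∏ i, Wq n i0 ^ v i := zpow_finset_sum (G := (LaurentR n ⧸ LI n)ˣ) (Wq n i0) Finset.univ v
    rw [h2a]
    exact map_prod (Units.coeHom _) _ _
  rw [h1, map_prod, h2]
  refine Finset.prod_congr rfl fun i _ => ?_
  rw [← Uu_zpow, Wq_eq n i0 i]
  show Ideal.Quotient.mk (LI n) ((Uu n i ^ v i : (LaurentR n)ˣ) : LaurentR n)
      = ((Wq n i ^ v i : (LaurentR n ⧸ LI n)ˣ) : LaurentR n ⧸ LI n)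
  rw [Wq, ← map_zpow, Units.coe_map]
  rfl

abbrev Sq (n : ℕ) : Type :=
  Polynomial ℂ ⧸ Ideal.span ({Polynomial.X ^ (n + 1) - 1} : Set (Polynomial ℂ))

noncomputable def pS (n : ℕ) : Sq n :=
  Ideal.Quotient.mk _ Polynomial.X

lemma pS_pow (n : ℕ) : pS n ^ (n + 1) = 1 := by
  rw [pS, ← map_pow, ← map_one (Ideal.Quotient.mk (Ideal.span {Polynomial.X ^ (n + 1) - 1})),
    Ideal.Quotient.eq]
  exact Ideal.subset_span rfl

noncomputable def uS (n : ℕ) : (Sq n)ˣ where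
  val := pS n
  inv := pS n ^ n
  val_inv := by rw [← pow_succ', pS_pow]
  inv_val := by rw [← pow_succ, pS_pow]

lemma uS_pow (n : ℕ) : uS n ^ ((n : ℤ) + 1) = 1 := by
  have : uS n ^ (n + 1) = 1 := by
    ext
    push_cast [Units.val_pow_eq_pow_val]
    exact pS_pow n
  rw [← this, ← zpow_natCast]
  norm_num

lemma uS_zpow_neg (n : ℕ) : uS n ^ (-(n : ℤ)) = uS n := by
  have h := uS_pow n
  calc uS n ^ (-(n : ℤ)) = uS n ^ (-(n : ℤ)) * (uS n ^ ((n : ℤ) + 1)) := by rw [h, mul_one]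
    _ = uS n ^ ((-(n : ℤ)) + ((n : ℤ) + 1)) := by rw [← zpow_add]
    _ = uS n := by norm_num

noncomputable def phiM (n : ℕ) : Multiplicative (Fin n → ℤ) →* Sq n where
  toFun v := ↑(uS n ^ (∑ i, (Multiplicative.toAdd v) i))
  map_one' := by simp
  map_mul' v w := by
    rw [← Units.val_mul, ← zpow_add, ← Finset.sum_add_distrib]
    rfl

noncomputable def Phi (n : ℕ) : LaurentR n →ₐ[ℂ] Sq n :=
  AddMonoidAlgebra.lift ℂ (Sq n) (Fin n → ℤ) (phiM n)

lemma Phi_single (n : ℕ) (v : Fin n → ℤ) :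
    Phi n (AddMonoidAlgebra.single v 1) = ↑(uS n ^ (∑ i, v i)) := by
  rw [Phi, AddMonoidAlgebra.lift_single, one_smul]
  rfl

lemma Phi_LX (n : ℕ) (i : Fin n) : Phi n (LX n i) = pS n := by
  rw [LX, Phi_single]
  simp [Finset.sum_pi_single']
  rfl

lemma Phi_LXinv (n : ℕ) : Phi n (LXinv n) = pS n := by
  rw [LXinv, Phi_single]
  have : (∑ _i : Fin n, (-1 : ℤ)) = -(n : ℤ) := by simp
  rw [this, uS_zpow_neg]
  rfl

lemma Phi_vanish (n : ℕ) : ∀ a ∈ LI n, Phi n a = 0 := by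
  intro a ha
  have h : LI n ≤ RingHom.ker (Phi n).toRingHom := by
    rw [LI, Ideal.span_le]
    rintro _ ⟨i, rfl⟩
    simp only [SetLike.mem_coe, RingHom.mem_ker, AlgHom.toRingHom_eq_coe,
      RingHom.coe_coe, map_sub]
    rw [Phi_LX, Phi_LXinv, sub_self]
  exact h ha

noncomputable def Phi' (n : ℕ) : (LaurentR n ⧸ LI n) →ₐ[ℂ] Sq n :=
  Ideal.Quotient.liftₐ (LI n) (Phi n) (Phi_vanish n)

lemma Phi'_mk (n : ℕ) (a : LaurentR n) :
    Phi' n (Ideal.Quotient.mk (LI n) a) = Phi n a := by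
  rw [Phi', Ideal.Quotient.liftₐ_apply]
  rfl

lemma mk_LXinv (n : ℕ) (i0 : Fin n) :
    Ideal.Quotient.mk (LI n) (LXinv n) = Ideal.Quotient.mk (LI n) (LX n i0) := by
  rw [Ideal.Quotient.eq]
  have := (LI n).neg_mem (LX_sub_mem n i0)
  simpa using this

lemma mk_LX (n : ℕ) (i : Fin n) (i0 : Fin n) :
    Ideal.Quotient.mk (LI n) (LX n i) = ↑(Wq n i0) := by
  rw [mk_LX_eq n i i0]
  rfl

lemma Wq_zpow_n1 (n : ℕ) (i0 : Fin n) : Wq n i0 ^ ((n : ℤ) + 1) = 1 := by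
  have h1 : (AddMonoidAlgebra.single (fun _ => (1 : ℤ)) 1 : LaurentR n) * LXinv n = 1 := by
    rw [LXinv, AddMonoidAlgebra.single_mul_single, mul_one]
    have : ((fun _ => (1 : ℤ)) + fun _ => (-1 : ℤ)) = (0 : Fin n → ℤ) := by
      funext j; simp
    rw [this]
    rfl
  have h2 : Ideal.Quotient.mk (LI n) (AddMonoidAlgebra.single (fun _ => (1 : ℤ)) 1)
      = ↑(Wq n i0 ^ (n : ℤ)) := by
    rw [mk_single n i0]
    norm_num
  have h3 : Ideal.Quotient.mk (LI n) (LXinv n) = ↑(Wq n i0 ^ (1 : ℤ)) := by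
    rw [mk_LXinv n i0, mk_LX n i0 i0, zpow_one]
  ext
  have := congrArg (Ideal.Quotient.mk (LI n)) h1
  rw [map_mul, map_one, h2, h3, ← Units.val_mul, ← zpow_add] at this
  simpa using this

lemma Wq_pow_n1 (n : ℕ) (i0 : Fin n) :
    ((Wq n i0 : LaurentR n ⧸ LI n)) ^ (n + 1) = 1 := by
  have := Wq_zpow_n1 n i0
  have h : ((Wq n i0 ^ ((n : ℤ) + 1) : (LaurentR n ⧸ LI n)ˣ) : LaurentR n ⧸ LI n) = 1 := by
    rw [this]; rfl
  rw [← h, show ((n : ℤ) + 1) = ((n + 1 : ℕ) : ℤ) by push_cast; ring, zpow_natCast,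
    Units.val_pow_eq_pow_val]

noncomputable def Psi (n : ℕ) (i0 : Fin n) : Polynomial ℂ →ₐ[ℂ] (LaurentR n ⧸ LI n) :=
  Polynomial.aeval ((Wq n i0 : LaurentR n ⧸ LI n))

lemma Psi_vanish (n : ℕ) (i0 : Fin n) :
    ∀ a ∈ Ideal.span ({Polynomial.X ^ (n + 1) - 1} : Set (Polynomial ℂ)),
      Psi n i0 a = 0 := by
  intro a ha
  obtain ⟨c, hc⟩ := Ideal.mem_span_singleton'.mp ha
  rw [← hc, map_mul]
  have : Psi n i0 (Polynomial.X ^ (n + 1) - 1) = 0 := by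
    rw [map_sub, map_one, map_pow, Psi, Polynomial.aeval_X, Wq_pow_n1, sub_self]
  rw [this, mul_zero]

noncomputable def Psi' (n : ℕ) (i0 : Fin n) : Sq n →ₐ[ℂ] (LaurentR n ⧸ LI n) :=
  Ideal.Quotient.liftₐ _ (Psi n i0) (Psi_vanish n i0)

lemma Psi'_mk (n : ℕ) (i0 : Fin n) (a : Polynomial ℂ) :
    Psi' n i0 (Ideal.Quotient.mk _ a) = Psi n i0 a := by
  rw [Psi', Ideal.Quotient.liftₐ_apply]
  rfl

lemma Psi'_uS (n : ℕ) (i0 : Fin n) : Psi' n i0 (pS n) = ↑(Wq n i0) := by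
  rw [pS, Psi'_mk, Psi, Polynomial.aeval_X]

lemma Psi'_unit (n : ℕ) (i0 : Fin n) (k : ℤ) :
    Psi' n i0 ((uS n ^ k : (Sq n)ˣ) : Sq n) = ↑(Wq n i0 ^ k) := by
  have hu : Units.map ((Psi' n i0 : Sq n →+* (LaurentR n ⧸ LI n)) :
      Sq n →* (LaurentR n ⧸ LI n)) (uS n) = Wq n i0 := by
    ext
    exact Psi'_uS n i0
  calc Psi' n i0 ((uS n ^ k : (Sq n)ˣ) : Sq n)
      = ↑(Units.map ((Psi' n i0 : Sq n →+* (LaurentR n ⧸ LI n)) :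
          Sq n →* (LaurentR n ⧸ LI n)) (uS n ^ k)) := rfl
    _ = ↑((Units.map ((Psi' n i0 : Sq n →+* (LaurentR n ⧸ LI n)) :
          Sq n →* (LaurentR n ⧸ LI n)) (uS n)) ^ k) := by rw [map_zpow]
    _ = ↑(Wq n i0 ^ k) := by rw [hu]

lemma comp1 (n : ℕ) (i0 : Fin n) :
    (Phi' n).comp (Psi' n i0) = AlgHom.id ℂ (Sq n) := by
  apply Ideal.Quotient.algHom_ext
  apply Polynomial.algHom_ext
  show Phi' n (Psi' n i0 (Ideal.Quotient.mk _ Polynomial.X)) = Ideal.Quotient.mk _ Polynomial.X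
  rw [Psi'_mk, Psi, Polynomial.aeval_X, ← mk_LX n i0 i0, Phi'_mk, Phi_LX]
  rfl

lemma comp2 (n : ℕ) (i0 : Fin n) :
    (Psi' n i0).comp (Phi' n) = AlgHom.id ℂ (LaurentR n ⧸ LI n) := by
  apply Ideal.Quotient.algHom_ext
  apply AddMonoidAlgebra.algHom_ext
  intro v
  show Psi' n i0 (Phi' n (Ideal.Quotient.mk _ (AddMonoidAlgebra.single v 1)))
      = Ideal.Quotient.mk _ (AddMonoidAlgebra.single v 1)
  rw [Phi'_mk, Phi_single, Psi'_unit, mk_single n i0]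
  exact Subsingleton.elim _ _


/-- `R/I ≅ ℂ[p]/(p^{n+1} − 1)`, sending each `x_i` to `p` and `f` to `(n+1)·p`. -/
theorem laurent_jacobian_quotient_iso (n : ℕ) (hn : 1 ≤ n) :
    ∃ e : (LaurentR n ⧸ LI n) ≃ₐ[ℂ]
        (Polynomial ℂ ⧸ Ideal.span {Polynomial.X ^ (n + 1) - 1}),
      (∀ i : Fin n,
        e (Ideal.Quotient.mk (LI n) (LX n i)) =
          Ideal.Quotient.mk (Ideal.span {Polynomial.X ^ (n + 1) - 1}) Polynomial.X) ∧
      e (Ideal.Quotient.mk (LI n) (Lf n)) =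
        ((n : ℂ) + 1) •
          Ideal.Quotient.mk (Ideal.span {Polynomial.X ^ (n + 1) - 1}) Polynomial.X := by
  have i0 : Fin n := ⟨0, hn⟩
  refine ⟨AlgEquiv.ofAlgHom (Phi' n) (Psi' n i0) (comp1 n i0) (comp2 n i0), ?_, ?_⟩
  · intro i
    show Phi' n (Ideal.Quotient.mk (LI n) (LX n i)) = _
    rw [Phi'_mk, Phi_LX]
    rfl
  · show Phi' n (Ideal.Quotient.mk (LI n) (Lf n)) = _
    rw [Phi'_mk, Lf, map_add, map_sum]
    simp only [Phi_LX, Phi_LXinv, Finset.sum_const, Finset.card_univ, Fintype.card_fin]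
    rw [show ((n : ℂ) + 1) = ((n + 1 : ℕ) : ℂ) by push_cast; ring,
      Nat.cast_smul_eq_nsmul, succ_nsmul]
    rfl
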